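/- Let A be a CFG-ring. A map f : Aⁿ → Aᵐ is contractive with respect to the metrics d(x,y) = e(x₁−y₁) ∨ ⋯ ∨ e(xₙ−yₙ) (and the analogous metric on Aᵐ) if and only if f is a polynomial map, i.e., there exist polynomials f₁,…,fₘ ∈ A[X₁,…,Xₙ] with f(x) = (f₁(x),…,fₘ(x)) for all x ∈ Aⁿ. -/
import Mathlib

/-- The order on idempotents of a commutative ring: `a ≤ b` iff `a * b = a`. -/
def ale {A : Type} [CommRing A] (a b : A) : Prop := a * b = a

/-- The join `v 0 ∨ v 1 ∨ ⋯ ∨ v (n-1)` of a finite family of idempotents, where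
`a ∨ b = a + b - a * b`. -/
def bigSup {A : Type} [CommRing A] : {n : ℕ} → (Fin n → A) → A
  | 0, _ => 0
  | _ + 1, v => v 0 + bigSup (Fin.tail v) - v 0 * bigSup (Fin.tail v)

/-- `A` is a CFG-ring: a commutative von Neumann regular ring having finitely many
elements `x₁, …, xₖ` such that every element of `A` is of the form `∑ aᵢ xᵢ` with
`aᵢ` idempotents having pairwise zero products and summing to `1`. -/
def IsCFGRing (A : Type) [CommRing A] : Prop :=
  (∀ a : A, ∃ b, a * b * a = a) ∧
  ∃ (k : ℕ) (xs : Fin k → A), ∀ x : A, ∃ a : Fin k → A,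
    (∀ i, a i * a i = a i) ∧ (∀ i j, i ≠ j → a i * a j = 0) ∧ (∑ i, a i) = 1 ∧
    x = ∑ i, a i * xs i

/-- `e` assigns to each `a : A` the unique idempotent `e a` with `aA = (e a)A`. -/
def IsIdemGen {A : Type} [CommRing A] (e : A → A) : Prop :=
  ∀ a : A, e a * e a = e a ∧ Ideal.span {a} = Ideal.span {e a}

/-- The Boolean metric on `Aⁿ`: `d x y = e(x₁ - y₁) ∨ ⋯ ∨ e(xₙ - yₙ)`. -/
def dVec {A : Type} [CommRing A] (e : A → A) {n : ℕ} (x y : Fin n → A) : A :=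
  bigSup fun i => e (x i - y i)

/-- `U` is an algebraic variety: the common zero set of finitely many polynomials. -/
def IsAlgebraicVariety {A : Type} [CommRing A] {n : ℕ} (U : Set (Fin n → A)) : Prop :=
  ∃ (k : ℕ) (ps : Fin k → MvPolynomial (Fin n) A),
    U = {x : Fin n → A | ∀ j, MvPolynomial.eval x (ps j) = 0}

/-- A subset `S` of a space with `A`-valued Boolean metric `d` is convex: all convex
combinations (with idempotent coefficients having pairwise zero products and summing
to `1`) of points of `S` exist in `S`. -/
def IsConvexSubA {A Z : Type} [CommRing A] (d : Z → Z → A) (S : Set Z) : Prop :=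
  ∀ (k : ℕ) (a : Fin k → A) (xs : Fin k → Z), (∀ i, xs i ∈ S) →
    (∀ i, a i * a i = a i) → (∀ i j, i ≠ j → a i * a j = 0) → (∑ i, a i) = 1 →
    ∃ x ∈ S, ∀ i, a i * d x (xs i) = 0

/-- `S` is a CFG-space: convex, and finitely many points of `S` have every point of `S`
as a convex combination. -/
def IsCFGSubA {A Z : Type} [CommRing A] (d : Z → Z → A) (S : Set Z) : Prop :=
  IsConvexSubA d S ∧
  ∃ (k : ℕ) (xs : Fin k → Z), (∀ i, xs i ∈ S) ∧
    ∀ x ∈ S, ∃ a : Fin k → A,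
      (∀ i, a i * a i = a i) ∧ (∀ i j, i ≠ j → a i * a j = 0) ∧ (∑ i, a i) = 1 ∧
      ∀ i, a i * d x (xs i) = 0

section Helpers
variable {A : Type} [CommRing A]

lemma bigSup_succ {n : ℕ} (v : Fin (n+1) → A) :
    bigSup v = v 0 + bigSup (Fin.tail v) - v 0 * bigSup (Fin.tail v) := rfl

lemma mul_prod_eq_self {ι : Type*} {s : Finset ι} {t : ι → A} {a : A}
    (h : ∀ i ∈ s, a * t i = a) : a * ∏ i ∈ s, t i = a := by
  classical
  induction s using Finset.induction_on with
  | empty => simp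
  | @insert b s' hx ih =>
    rw [Finset.prod_insert hx, ← mul_assoc, h b (Finset.mem_insert_self b s')]
    exact ih fun i hi => h i (Finset.mem_insert_of_mem hi)

lemma prod_idem {ι : Type*} {s : Finset ι} {t : ι → A}
    (h : ∀ i ∈ s, t i * t i = t i) :
    (∏ i ∈ s, t i) * ∏ i ∈ s, t i = ∏ i ∈ s, t i := by
  rw [← Finset.prod_mul_distrib]; exact Finset.prod_congr rfl h

lemma bigSup_eq_one_sub_prod {n : ℕ} (v : Fin n → A) :
    bigSup v = 1 - ∏ i, (1 - v i) := by
  induction n with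
  | zero => simp [bigSup]
  | succ n ih =>
    rw [bigSup_succ, ih (Fin.tail v), Fin.prod_univ_succ]
    simp only [Fin.tail]
    ring

lemma mul_bigSup_eq_zero {n : ℕ} {v : Fin n → A} {a : A} (h : ∀ i, a * v i = 0) :
    a * bigSup v = 0 := by
  rw [bigSup_eq_one_sub_prod, mul_sub, mul_one,
    mul_prod_eq_self (fun i _ => by linear_combination -h i), sub_self]

lemma mul_bigSup_self {n : ℕ} {v : Fin n → A} (hv : ∀ i, v i * v i = v i) (i : Fin n) :
    v i * bigSup v = v i := by
  rw [bigSup_eq_one_sub_prod, mul_sub, mul_one]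
  have : v i * ∏ j, (1 - v j) = 0 := by
    rw [← Finset.prod_erase_mul _ _ (Finset.mem_univ i)]
    linear_combination (-(∏ j ∈ Finset.univ.erase i, (1 - v j))) * (hv i)
  rw [this, sub_zero]

lemma bigSup_mul_of_le {n : ℕ} {v : Fin n → A} {d : A} (h : ∀ i, v i * d = v i) :
    bigSup v * d = bigSup v := by
  induction n with
  | zero => simp [bigSup]
  | succ n ih =>
    have ht := ih (v := Fin.tail v) (fun i => h i.succ)
    rw [bigSup_succ]
    linear_combination h 0 + (1 - v 0) * ht

lemma cfg_reduced (hreg : ∀ a : A, ∃ b, a * b * a = a) {b : A} (hb : IsNilpotent b) :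
    b = 0 := by
  obtain ⟨c, hc⟩ := hreg b
  obtain ⟨M, hM⟩ := hb
  have key : ∀ m : ℕ, b = b ^ (m + 1) * c ^ m := by
    intro m
    induction m with
    | zero => simp
    | succ m ih =>
      calc b = b ^ (m+1) * c ^ m := ih
        _ = b ^ m * b * c ^ m := by ring
        _ = b ^ m * (b * c * b) * c ^ m := by rw [hc]
        _ = b ^ (m+1+1) * c ^ (m+1) := by ring
  have := key M
  rw [pow_succ, hM] at this
  simpa using this

lemma cfg_exists_pow (hA : IsCFGRing A) :
    ∃ N : ℕ, 1 ≤ N ∧ ∀ a : A, a ^ (N + 1) = a := by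
  obtain ⟨hreg, k, xs, hx⟩ := hA
  refine ⟨(k - 1).factorial, Nat.one_le_iff_ne_zero.mpr (Nat.factorial_ne_zero _), ?_⟩
  set N := (k - 1).factorial with hN
  intro a
  have hnil : a ^ (N + 1) - a ∈ nilradical A := by
    rw [nilradical_eq_sInf]
    refine Ideal.mem_sInf.mpr ?_
    intro P hP
    haveI : P.IsPrime := hP
    rw [← Ideal.Quotient.eq_zero_iff_mem, map_sub, map_pow, sub_eq_zero]
    set R := A ⧸ P
    set φ : A →+* R := Ideal.Quotient.mk P
    have hsurj : Function.Surjective (fun i : Fin k => φ (xs i)) := by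
      intro r
      obtain ⟨b, rfl⟩ := Ideal.Quotient.mk_surjective r
      obtain ⟨av, h1, h2, h3, h4⟩ := hx b
      have hidem : ∀ i, φ (av i) = 0 ∨ φ (av i) = 1 := by
        intro i
        have : φ (av i) * (φ (av i) - 1) = 0 := by
          have := congrArg φ (h1 i)
          rw [map_mul] at this
          linear_combination this
        rcases mul_eq_zero.mp this with h | h
        · exact Or.inl h
        · exact Or.inr (by linear_combination h)
      have hsum : (∑ i, φ (av i)) = 1 := by
        rw [← map_sum, h3, map_one]
      have hex : ∃ i, φ (av i) = 1 := by
        by_contra hno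
        push_neg at hno
        have : ∀ i ∈ Finset.univ, φ (av i) = 0 := fun i _ =>
          (hidem i).resolve_right (hno i)
        rw [Finset.sum_congr rfl this] at hsum
        simp at hsum
      obtain ⟨i, hi⟩ := hex
      refine ⟨i, ?_⟩
      have hb' : φ b = ∑ j, φ (av j) * φ (xs j) := by
        rw [h4, map_sum]; simp [map_mul]
      rw [hb']
      have hz : ∀ j ∈ Finset.univ, j ≠ i → φ (av j) * φ (xs j) = 0 := by
        intro j _ hj
        have h0 := congrArg φ (h2 j i hj)
        rw [map_mul, map_zero] at h0
        have hz0 : φ (av j) = 0 := by rw [← mul_one (φ (av j)), ← hi, h0]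
        rw [hz0, zero_mul]
      rw [Finset.sum_eq_single_of_mem i (Finset.mem_univ i) hz, hi, one_mul]
    haveI : Finite R := Finite.of_surjective _ hsurj
    haveI : Fintype R := Fintype.ofFinite R
    have hfield : IsField R := Finite.isField_of_domain R
    letI : Field R := hfield.toField
    have hcard : Fintype.card R ≤ k := by
      have := Fintype.card_le_of_surjective _ hsurj
      simpa using this
    have hcard2 : 2 ≤ Fintype.card R := Fintype.one_lt_card
    have hdvd : (Fintype.card R - 1) ∣ N := by
      rw [hN]
      exact Nat.dvd_factorial (by omega) (by omega)
    obtain ⟨c, hc⟩ := hdvd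
    have key : ∀ r : R, r ^ (N + 1) = r := by
      intro r
      by_cases hr : r = 0
      · subst hr; exact zero_pow (by omega)
      · have h1 : r ^ (Fintype.card R - 1) = 1 :=
          FiniteField.pow_card_sub_one_eq_one r hr
        rw [pow_succ, hc, pow_mul, h1, one_pow, one_mul]
    rw [← map_pow]
    exact key (φ a)
  have hn : IsNilpotent (a ^ (N + 1) - a) := hnil
  have := cfg_reduced hreg hn
  linear_combination this

variable {N : ℕ}

lemma powN_idem (hN : 1 ≤ N) (hpow : ∀ a : A, a ^ (N + 1) = a) (a : A) :
    a ^ N * a ^ N = a ^ N := by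
  have h1 : N + N = (N + 1) + (N - 1) := by omega
  rw [← pow_add, h1, pow_add, hpow, ← pow_succ']
  congr 1
  omega

lemma idem_pow (hN : 1 ≤ N) {b : A} (hb : b * b = b) : b ^ N = b := by
  obtain ⟨N', rfl⟩ : ∃ N', N = N' + 1 := ⟨N - 1, by omega⟩
  induction N' with
  | zero => simp
  | succ N' ih => rw [pow_succ, ih (by omega), hb]

lemma e_eq_powN (hN : 1 ≤ N) (hpow : ∀ a : A, a ^ (N + 1) = a)
    {e : A → A} (he : IsIdemGen e) (a : A) : e a = a ^ N := by
  obtain ⟨hidem, hspan⟩ := he a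
  have h1 : a ∣ e a := by
    rw [← Ideal.mem_span_singleton, hspan]
    exact Ideal.mem_span_singleton_self _
  have h2 : e a ∣ a := by
    rw [← Ideal.mem_span_singleton, ← hspan]
    exact Ideal.mem_span_singleton_self _
  obtain ⟨t, ht⟩ := h1
  obtain ⟨s, hs⟩ := h2
  have hea : e a * a ^ N = e a := by
    rw [ht]
    calc a * t * a ^ N = t * a ^ (N + 1) := by ring
      _ = t * a := by rw [hpow]
      _ = a * t := by ring
  have haN : a ^ N * e a = a ^ N := by
    have h3 : a ^ N = e a * s ^ N := by
      rw [show a ^ N = (e a * s) ^ N by rw [← hs], mul_pow, idem_pow hN hidem]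
    rw [h3, mul_comm (e a * s ^ N) (e a), ← mul_assoc, hidem]
  linear_combination haN - hea

end Helpers

/-- Over a CFG-ring `A`, a map `f : Aⁿ → Aᵐ` is contractive for the metrics
`d x y = e(x₁-y₁) ∨ ⋯ ∨ e(xₖ-yₖ)` iff it is a polynomial map. -/
theorem stmt13 {A : Type} [CommRing A] (hA : IsCFGRing A)
    (e : A → A) (he : IsIdemGen e)
    {n m : ℕ} (f : (Fin n → A) → (Fin m → A)) :
    (∀ x y : Fin n → A, ale (dVec e (f x) (f y)) (dVec e x y)) ↔
    ∃ p : Fin m → MvPolynomial (Fin n) A,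
      ∀ x : Fin n → A, f x = fun j => MvPolynomial.eval x (p j) := by
  constructor
  · -- contractive → polynomial
    intro hf
    by_cases htriv : (0 : A) = 1
    · haveI : Subsingleton A := subsingleton_of_zero_eq_one htriv
      exact ⟨fun _ => 0, fun x => funext fun j => Subsingleton.elim _ _⟩
    obtain ⟨N, hN, hpow⟩ := cfg_exists_pow hA
    have hE : ∀ a : A, e a = a ^ N := e_eq_powN hN hpow he
    obtain ⟨hreg, k, xs, hx⟩ := hA
    have hk : 0 < k := by
      rcases Nat.eq_zero_or_pos k with h | h
      · subst h
        obtain ⟨av, _, _, h3, _⟩ := hx 0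
        exact absurd (by simpa using h3) htriv
      · exact h
    have hK : 0 < k ^ n := pow_pos hk n
    set K := k ^ n with hKdef
    set E : (Fin n → Fin k) ≃ Fin K := finFunctionFinEquiv with hEdef
    set g' : ℕ → (Fin n → Fin k) :=
      fun M => if h : M < K then E.symm ⟨M, h⟩ else E.symm ⟨0, hK⟩ with hg'def
    have hg'surj : ∀ g : Fin n → Fin k, ∃ M, M < K ∧ g' M = g := by
      intro g
      refine ⟨(E g : ℕ), (E g).isLt, ?_⟩
      simp only [hg'def, dif_pos (E g).isLt, Fin.eta, Equiv.symm_apply_apply]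
    refine ⟨fun j => ∑ M ∈ Finset.range K,
      ((∏ i, (1 - (MvPolynomial.X i - MvPolynomial.C (xs (g' M i))) ^ N)) *
        ∏ i ∈ Finset.range M,
          (1 - ∏ i', (1 - (MvPolynomial.X i' - MvPolynomial.C (xs (g' i i'))) ^ N))) *
        MvPolynomial.C (f (fun i => xs (g' M i)) j), ?_⟩
    intro x
    funext j
    show f x j = MvPolynomial.eval x _
    -- the values of the basic idempotents
    set bb : ℕ → A := fun M => ∏ i, (1 - (x i - xs (g' M i)) ^ N) with hbbdef
    have heval : MvPolynomial.eval x (∑ M ∈ Finset.range K,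
        ((∏ i, (1 - (MvPolynomial.X i - MvPolynomial.C (xs (g' M i))) ^ N)) *
          ∏ i ∈ Finset.range M,
            (1 - ∏ i', (1 - (MvPolynomial.X i' - MvPolynomial.C (xs (g' i i'))) ^ N))) *
          MvPolynomial.C (f (fun i => xs (g' M i)) j)) =
        ∑ M ∈ Finset.range K,
          (bb M * ∏ i ∈ Finset.range M, (1 - bb i)) * f (fun i => xs (g' M i)) j := by
      simp [hbbdef, map_sum, map_mul, map_prod, map_sub, map_pow]
    rw [heval]
    -- coordinatewise decompositions of x
    choose av h1 h2 h3 h4 using fun i : Fin n => hx (x i)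
    set Ag : (Fin n → Fin k) → A := fun g => ∏ i, av i (g i) with hAgdef
    have hAsum : (∑ g : Fin n → Fin k, Ag g) = 1 := by
      classical
      calc (∑ g : Fin n → Fin k, Ag g) = ∏ i, ∑ jj, av i jj := (Fintype.prod_sum _).symm
        _ = 1 := by simp [h3]
    have hAg_diff : ∀ (g : Fin n → Fin k) (i : Fin n), Ag g * (x i - xs (g i)) = 0 := by
      intro g i
      have hfac : Ag g * av i (g i) = Ag g := by
        rw [hAgdef]
        simp only
        rw [← Finset.prod_erase_mul _ _ (Finset.mem_univ i), mul_assoc, h1 i (g i)]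
      have hxi : Ag g * x i = Ag g * xs (g i) := by
        rw [h4 i, Finset.mul_sum]
        rw [Finset.sum_eq_single_of_mem (g i) (Finset.mem_univ _)]
        · rw [← mul_assoc, hfac]
        · intro jj _ hj
          have h0 : Ag g * av i jj = 0 := by
            rw [← hfac, mul_assoc, h2 i (g i) jj (Ne.symm hj), mul_zero]
          rw [← mul_assoc, h0, zero_mul]
      linear_combination hxi
    have hAg_bb : ∀ (M : ℕ), Ag (g' M) * bb M = Ag (g' M) := by
      intro M
      rw [hbbdef]
      refine mul_prod_eq_self ?_
      intro i _
      have hd : Ag (g' M) * (x i - xs (g' M i)) ^ N = 0 := by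
        obtain ⟨N', rfl⟩ : ∃ N', N = N' + 1 := ⟨N - 1, by omega⟩
        rw [pow_succ', ← mul_assoc, hAg_diff (g' M) i, zero_mul]
      linear_combination -hd
    have hprod0 : (∏ M ∈ Finset.range K, (1 - bb M)) = 0 := by
      have hmain : (∏ M ∈ Finset.range K, (1 - bb M)) * (∑ g : Fin n → Fin k, Ag g) = 0 := by
        rw [Finset.mul_sum]
        apply Finset.sum_eq_zero
        intro g _
        obtain ⟨M, hM, hgm⟩ := hg'surj g
        rw [← Finset.prod_erase_mul _ _ (Finset.mem_range.mpr hM), mul_assoc]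
        have hz : (1 - bb M) * Ag g = 0 := by
          rw [← hgm]
          linear_combination -hAg_bb M
        rw [hz, mul_zero]
      rw [hAsum, mul_one] at hmain
      exact hmain
    have htel : ∀ M : ℕ, (∑ i ∈ Finset.range M, bb i * ∏ i' ∈ Finset.range i, (1 - bb i')) +
        ∏ i ∈ Finset.range M, (1 - bb i) = 1 := by
      intro M
      induction M with
      | zero => simp
      | succ M ih =>
        rw [Finset.sum_range_succ, Finset.prod_range_succ]
        linear_combination ih
    have hsum1 : (∑ M ∈ Finset.range K, bb M * ∏ i ∈ Finset.range M, (1 - bb i)) = 1 := by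
      have := htel K
      rw [hprod0, add_zero] at this
      exact this
    -- each coefficient annihilates the difference
    have hannih : ∀ M ∈ Finset.range K,
        (bb M * ∏ i ∈ Finset.range M, (1 - bb i)) * (f x j - f (fun i => xs (g' M i)) j) = 0 := by
      intro M _
      set c : A := bb M * ∏ i ∈ Finset.range M, (1 - bb i) with hcdef
      have hbbidem : bb M * bb M = bb M := by
        rw [hbbdef]
        refine prod_idem ?_
        intro i _
        have := powN_idem hN hpow (x i - xs (g' M i))
        linear_combination this
      have hcb : c * bb M = c := by
        rw [hcdef]
        linear_combination (∏ i ∈ Finset.range M, (1 - bb i)) * hbbidem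
      have hbd : ∀ i : Fin n, bb M * (x i - xs (g' M i)) = 0 := by
        intro i
        rw [hbbdef]
        simp only
        rw [← Finset.prod_erase_mul _ _ (Finset.mem_univ i), mul_assoc]
        have : (1 - (x i - xs (g' M i)) ^ N) * (x i - xs (g' M i)) = 0 := by
          have := hpow (x i - xs (g' M i))
          rw [pow_succ] at this
          linear_combination -this
        rw [this, mul_zero]
      have hcd : ∀ i : Fin n, c * (x i - xs (g' M i)) = 0 := by
        intro i
        rw [hcdef]
        rw [mul_comm (bb M) (∏ i' ∈ Finset.range M, (1 - bb i')), mul_assoc, hbd i, mul_zero]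
      have hcdN : ∀ i : Fin n, c * (x i - xs (g' M i)) ^ N = 0 := by
        intro i
        obtain ⟨N', rfl⟩ : ∃ N', N = N' + 1 := ⟨N - 1, by omega⟩
        rw [pow_succ', ← mul_assoc, hcd i, zero_mul]
      have hcD : c * dVec e x (fun i => xs (g' M i)) = 0 := by
        rw [dVec]
        simp only [hE]
        exact mul_bigSup_eq_zero hcdN
      have hDf := hf x (fun i => xs (g' M i))
      rw [ale] at hDf
      have hcDf : c * dVec e (f x) (f (fun i => xs (g' M i))) = 0 := by
        linear_combination (dVec e (f x) (f (fun i => xs (g' M i)))) * hcD - c * hDf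
      have hδN : (f x j - f (fun i => xs (g' M i)) j) ^ N *
          dVec e (f x) (f (fun i => xs (g' M i))) =
          (f x j - f (fun i => xs (g' M i)) j) ^ N := by
        have hDfeq : dVec e (f x) (f (fun i => xs (g' M i))) =
            bigSup (fun j' => (f x j' - f (fun i => xs (g' M i)) j') ^ N) := by
          rw [dVec]
          simp only [hE]
        rw [hDfeq]
        exact mul_bigSup_self (v := fun j' => (f x j' - f (fun i => xs (g' M i)) j') ^ N)
          (fun j' => powN_idem hN hpow _) j
      have hcδN : c * (f x j - f (fun i => xs (g' M i)) j) ^ N = 0 := by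
        linear_combination (f x j - f (fun i => xs (g' M i)) j) ^ N * hcDf - c * hδN
      have : c * (f x j - f (fun i => xs (g' M i)) j) = 0 := by
        have hp := hpow (f x j - f (fun i => xs (g' M i)) j)
        rw [pow_succ] at hp
        calc c * (f x j - f (fun i => xs (g' M i)) j)
            = c * ((f x j - f (fun i => xs (g' M i)) j) ^ N *
              (f x j - f (fun i => xs (g' M i)) j)) := by rw [hp]
          _ = (c * (f x j - f (fun i => xs (g' M i)) j) ^ N) *
              (f x j - f (fun i => xs (g' M i)) j) := by ring
          _ = 0 := by rw [hcδN, zero_mul]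
      exact this
    calc f x j = (∑ M ∈ Finset.range K, bb M * ∏ i ∈ Finset.range M, (1 - bb i)) * f x j := by
          rw [hsum1, one_mul]
      _ = ∑ M ∈ Finset.range K,
            (bb M * ∏ i ∈ Finset.range M, (1 - bb i)) * f (fun i => xs (g' M i)) j := by
          rw [Finset.sum_mul]
          refine Finset.sum_congr rfl ?_
          intro M hM
          linear_combination hannih M hM
  · -- polynomial → contractive
    rintro ⟨p, hp⟩ x y
    rw [ale]
    set D := dVec e x y with hD
    have hvidem : ∀ i : Fin n, e (x i - y i) * e (x i - y i) = e (x i - y i) :=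
      fun i => (he _).1
    have hcomp : ∀ i, e (x i - y i) * D = e (x i - y i) := by
      intro i
      rw [hD, dVec]
      exact mul_bigSup_self hvidem i
    have hxyD : ∀ i, (x i - y i) * D = x i - y i := by
      intro i
      obtain ⟨t, ht⟩ : e (x i - y i) ∣ (x i - y i) := by
        rw [← Ideal.mem_span_singleton, ← (he _).2]
        exact Ideal.mem_span_singleton_self _
      linear_combination D * ht + t * hcomp i - ht
    have key : ∀ q : MvPolynomial (Fin n) A,
        (MvPolynomial.eval x q - MvPolynomial.eval y q) * D =
          MvPolynomial.eval x q - MvPolynomial.eval y q := by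
      intro q
      induction q using MvPolynomial.induction_on with
      | C a => simp
      | add q r hq hr =>
        simp only [map_add]
        linear_combination hq + hr
      | mul_X q i hq =>
        simp only [map_mul, MvPolynomial.eval_X]
        linear_combination (x i) * hq + (MvPolynomial.eval y q) * hxyD i
    have hD2 : ∀ j, e (f x j - f y j) * D = e (f x j - f y j) := by
      intro j
      have hδ : (f x j - f y j) * D = f x j - f y j := by
        rw [hp x, hp y]
        exact key (p j)
      obtain ⟨t, ht⟩ : (f x j - f y j) ∣ e (f x j - f y j) := by
        rw [← Ideal.mem_span_singleton, (he _).2]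
        exact Ideal.mem_span_singleton_self _
      linear_combination D * ht + t * hδ - ht
    rw [dVec]
    exact bigSup_mul_of_le hD2
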